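/- Let 0 < ν < √2 and let A be the soliton on finite background. Then there exists τ ∈ ℝ with A(0,τ) = 0 if and only if ν ≤ √(3/2). Equivalently, the condition |2(1−ν²)/√(4−2ν²)| ≤ 1 holds precisely when ν² ≤ 3/2. Thus the SFB wave field has singular points (vanishing amplitude) exactly for modulation frequencies 0 < ν ≤ √(3/2). -/

import Mathlib

open Real Filter Topology

/-- Benjamin–Feir growth rate `σ = ν√(2−ν²)`. -/
noncomputable def sfbSigma (ν : ℝ) : ℝ := ν * Real.sqrt (2 - ν ^ 2)

/-- Displaced amplitude `G(ξ,τ) = P(ξ)/(Q(ξ) − σ cos(ντ))` of the SFB, with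
`P(ξ) = ν√2·√(2ν²cosh²(σξ) − σ²)` and `Q(ξ) = ν√2·cosh(σξ)`. -/
noncomputable def sfbG (ν ξ τ : ℝ) : ℝ :=
  (ν * Real.sqrt 2 * Real.sqrt (2 * ν ^ 2 * Real.cosh (sfbSigma ν * ξ) ^ 2 - sfbSigma ν ^ 2)) /
  (ν * Real.sqrt 2 * Real.cosh (sfbSigma ν * ξ) - sfbSigma ν * Real.cos (ν * τ))

/-- SFB phase `φ(ξ) = arctan(−(σ/ν²) tanh(σξ))`. -/
noncomputable def sfbPhi (ν ξ : ℝ) : ℝ :=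
  Real.arctan (-(sfbSigma ν / ν ^ 2) * Real.tanh (sfbSigma ν * ξ))

/-- The soliton on finite background: `A(ξ,τ) = e^{−iξ}(G(ξ,τ)e^{iφ(ξ)} − 1)`. -/
noncomputable def sfbA (ν ξ τ : ℝ) : ℂ :=
  Complex.exp (-Complex.I * (ξ : ℂ)) *
    ((sfbG ν ξ τ : ℂ) * Complex.exp (Complex.I * (sfbPhi ν ξ : ℂ)) - 1)

/-- For `0 < ν < √2`, the SFB has singular points (some `τ` with
`A(0,τ) = 0`) if and only if `ν ≤ √(3/2)`; equivalently,
`|2(1−ν²)/√(4−2ν²)| ≤ 1` holds precisely when `ν² ≤ 3/2`. -/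
theorem sfb_singular_points_exist_iff
    (ν : ℝ) (hν0 : 0 < ν) (hν2 : ν < Real.sqrt 2) :
    ((∃ τ : ℝ, sfbA ν 0 τ = 0) ↔ ν ≤ Real.sqrt (3 / 2)) ∧
    (|2 * (1 - ν ^ 2) / Real.sqrt (4 - 2 * ν ^ 2)| ≤ 1 ↔ ν ^ 2 ≤ 3 / 2) := by
  have hν2' : ν ^ 2 < 2 := by
    nlinarith [Real.sq_sqrt (by norm_num : (0:ℝ) ≤ 2), Real.sqrt_nonneg 2]
  have h2 : (0:ℝ) < 2 - ν ^ 2 := by linarith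
  have hsq2 : (0:ℝ) < Real.sqrt (2 - ν ^ 2) := Real.sqrt_pos.mpr h2
  have hs22 : Real.sqrt 2 ^ 2 = 2 := Real.sq_sqrt (by norm_num)
  have hs2m : Real.sqrt (2 - ν ^ 2) ^ 2 = 2 - ν ^ 2 := Real.sq_sqrt h2.le
  have hσpos : 0 < sfbSigma ν := mul_pos hν0 hsq2
  have hσ2 : sfbSigma ν ^ 2 = ν ^ 2 * (2 - ν ^ 2) := by
    rw [sfbSigma, mul_pow, hs2m]
  set c : ℝ := Real.sqrt 2 * (1 - ν ^ 2) / Real.sqrt (2 - ν ^ 2) with hc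
  have hceq : 2 * (1 - ν ^ 2) / Real.sqrt (4 - 2 * ν ^ 2) = c := by
    have h4 : (4 : ℝ) - 2 * ν ^ 2 = 2 * (2 - ν ^ 2) := by ring
    rw [h4, Real.sqrt_mul (by norm_num), hc]
    field_simp
    linear_combination (-(1 - ν ^ 2)) * hs22
  have hC : |c| ≤ 1 ↔ ν ^ 2 ≤ 3 / 2 := by
    rw [← sq_le_one_iff_abs_le_one, hc, div_pow, mul_pow, hs22, hs2m,
      div_le_one h2]
    constructor
    · intro h; nlinarith [sq_nonneg ν, hν0]
    · intro h
      nlinarith [sq_nonneg ν, hν0,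
        mul_nonneg (sq_nonneg ν) (by linarith : (0:ℝ) ≤ 3/2 - ν^2)]
  -- σ * c = ν√2(1 - ν²)
  have hsc : sfbSigma ν * c = ν * Real.sqrt 2 * (1 - ν ^ 2) := by
    rw [sfbSigma, hc]; field_simp
  have hN : (0:ℝ) < ν * Real.sqrt 2 * ν ^ 2 := by positivity
  -- reduce A(0,τ)=0 to cos(ντ)=c
  have hA : ∀ τ : ℝ, sfbA ν 0 τ = 0 ↔ Real.cos (ν * τ) = c := by
    intro τ
    have hphi : sfbPhi ν 0 = 0 := by simp [sfbPhi]
    have hG : sfbG ν 0 τ =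
        (ν * Real.sqrt 2 * ν ^ 2) /
          (ν * Real.sqrt 2 - sfbSigma ν * Real.cos (ν * τ)) := by
      have harg : 2 * ν ^ 2 * Real.cosh (sfbSigma ν * 0) ^ 2 - sfbSigma ν ^ 2
          = (ν ^ 2) ^ 2 := by
        rw [mul_zero, Real.cosh_zero, hσ2]; ring
      rw [sfbG, harg, Real.sqrt_sq (sq_nonneg ν), mul_zero, Real.cosh_zero,
        mul_one]
    have hexp : sfbA ν 0 τ = (sfbG ν 0 τ : ℂ) - 1 := by
      simp [sfbA, hphi]
    rw [hexp, sub_eq_zero]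
    have hiff : (sfbG ν 0 τ : ℂ) = 1 ↔ sfbG ν 0 τ = 1 := by
      exact_mod_cast Iff.rfl
    rw [hiff, hG]
    constructor
    · intro h
      have hD : ν * Real.sqrt 2 - sfbSigma ν * Real.cos (ν * τ) ≠ 0 := by
        intro h0
        rw [h0, div_zero] at h
        norm_num at h
      have heq : ν * Real.sqrt 2 * ν ^ 2
          = ν * Real.sqrt 2 - sfbSigma ν * Real.cos (ν * τ) :=
        (div_eq_one_iff_eq hD).mp h
      have : sfbSigma ν * Real.cos (ν * τ) = sfbSigma ν * c := by
        rw [hsc]; linarith [heq]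
      exact mul_left_cancel₀ hσpos.ne' this
    · intro h
      rw [h]
      have hD : ν * Real.sqrt 2 - sfbSigma ν * c = ν * Real.sqrt 2 * ν ^ 2 := by
        rw [hsc]; ring
      rw [hD, div_self hN.ne']
  have hexiff : (∃ τ : ℝ, sfbA ν 0 τ = 0) ↔ |c| ≤ 1 := by
    constructor
    · rintro ⟨τ, hτ⟩
      rw [← (hA τ).mp hτ]
      exact Real.abs_cos_le_one _
    · intro h
      obtain ⟨h1, h2'⟩ := abs_le.mp h
      refine ⟨Real.arccos c / ν, (hA _).mpr ?_⟩
      rw [mul_comm, div_mul_cancel₀ _ hν0.ne']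
      exact Real.cos_arccos h1 h2'
  refine ⟨?_, by rw [hceq]; exact hC⟩
  rw [hexiff, hC, Real.le_sqrt' hν0]
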